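/- Let Φ_L be the initialization map of a subsystem initialization (V', τ') of ℂ^{d_L} into ℂ^{d_P} with τ' of full rank, let 𝒩 : M_{d_P}(ℂ) → M_{d_P}(ℂ) be a CPTP map, and suppose there exist a subsystem initialization (V, τ_F) of ℂ^{d_L} into ℂ^{d_P} and a CPTP map Φ_P such that Φ_P(Φ_L(ρ)) = V(ρ ⊗ τ_F ⊕ 0)V* and Φ_P(𝒩(Φ_L(ρ))) = Φ_P(Φ_L(ρ)) for every density operator ρ on ℂ^{d_L}. Then for every λ ∈ [0,1], with ℳ_λ := λ𝒩 + (1−λ)·id, and for every pair of orthogonal unit vectors ψ_i, ψ_j ∈ ℂ^{d_L}, one has tr( Φ_L(|ψ_i⟩⟨ψ_i|) · ℳ_λ(Φ_L(|ψ_j⟩⟨ψ_j|)) ) = 0. -/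

import Mathlib

set_option linter.unusedSectionVars false
set_option maxHeartbeats 1000000


open Matrix Kronecker
open scoped ComplexOrder

noncomputable section

/-- A density operator: positive semidefinite with trace 1. -/
def IsDensity {n : Type*} [Fintype n] (ρ : Matrix n n ℂ) : Prop :=
  ρ.PosSemidef ∧ ρ.trace = 1

/-- A map between matrix spaces is CPTP if it has a Kraus representation. -/
def IsCPTP {n₁ n₂ : Type*} [Fintype n₁] [Fintype n₂] [DecidableEq n₁] [DecidableEq n₂]
    (Φ : Matrix n₁ n₁ ℂ → Matrix n₂ n₂ ℂ) : Prop :=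
  ∃ (m : ℕ) (K : Fin m → Matrix n₂ n₁ ℂ),
    (∀ A, Φ A = ∑ i, K i * A * (K i)ᴴ) ∧ (∑ i, (K i)ᴴ * K i = 1)

/-- A unitary matrix (between possibly differently indexed spaces). -/
def IsUnitaryMx {m n : Type*} [Fintype m] [Fintype n] [DecidableEq m] [DecidableEq n]
    (V : Matrix m n ℂ) : Prop :=
  Vᴴ * V = 1 ∧ V * Vᴴ = 1

/-- The map `ρ ↦ V (ρ ⊗ τ ⊕ 0) Vᴴ` of a subsystem initialization `(V, τ)`. -/
def initMap {L F R P : Type*} [Fintype L] [Fintype F] [Fintype R] [Fintype P]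
    (V : Matrix P ((L × F) ⊕ R) ℂ) (τ : Matrix F F ℂ) (ρ : Matrix L L ℂ) :
    Matrix P P ℂ :=
  V * (Matrix.fromBlocks (ρ ⊗ₖ τ) 0 0 0 : Matrix ((L × F) ⊕ R) ((L × F) ⊕ R) ℂ) * Vᴴ

/-- The orthogonal projection `Π_V = V (1 ⊗ 1 ⊕ 0) Vᴴ` onto the image of the
tensor summand. -/
def projOf {L F R P : Type*} [Fintype L] [Fintype F] [Fintype R] [Fintype P]
    [DecidableEq L] [DecidableEq F]
    (V : Matrix P ((L × F) ⊕ R) ℂ) : Matrix P P ℂ :=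
  V * (Matrix.fromBlocks 1 0 0 0 : Matrix ((L × F) ⊕ R) ((L × F) ⊕ R) ℂ) * Vᴴ


open scoped MatrixOrder in
theorem Matrix.posSemidef_iff_eq_transpose_mul_self {n : Type*} [Fintype n]
    {A : Matrix n n ℂ} : A.PosSemidef ↔ ∃ B : Matrix n n ℂ, A = Bᴴ * B := by
  classical
  constructor
  · intro hA
    have h0 : 0 ≤ A := Matrix.nonneg_iff_posSemidef.mpr hA
    refine ⟨CFC.sqrt A, ?_⟩
    rw [← Matrix.star_eq_conjTranspose, (CFC.sqrt_nonneg A).isSelfAdjoint.star_eq,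
      CFC.sqrt_mul_sqrt_self A h0]
  · rintro ⟨B, rfl⟩
    exact Matrix.posSemidef_conjTranspose_mul_self B

namespace Stmt2Aux


variable {n m : Type*} [Fintype n] [Fintype m]

lemma trace_conjTranspose_mul_self_eq (M : Matrix m n ℂ) :
    (Mᴴ * M).trace = ((∑ j, ∑ i, Complex.normSq (M i j) : ℝ) : ℂ) := by
  simp only [Matrix.trace, Matrix.diag, Matrix.mul_apply, Matrix.conjTranspose_apply]
  push_cast
  refine Finset.sum_congr rfl fun j _ => Finset.sum_congr rfl fun i _ => ?_
  rw [Complex.normSq_eq_conj_mul_self, RCLike.star_def]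

lemma trace_conjTranspose_mul_self_nonneg (M : Matrix m n ℂ) :
    0 ≤ (Mᴴ * M).trace := by
  rw [trace_conjTranspose_mul_self_eq]
  rw [Complex.zero_le_real]
  exact Finset.sum_nonneg fun j _ => Finset.sum_nonneg fun i _ => Complex.normSq_nonneg _

lemma eq_zero_of_trace_conjTranspose_mul_self (M : Matrix m n ℂ)
    (h : (Mᴴ * M).trace = 0) : M = 0 := by
  rw [trace_conjTranspose_mul_self_eq] at h
  have h' : (∑ j, ∑ i, Complex.normSq (M i j) : ℝ) = 0 := by exact_mod_cast h
  ext i j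
  have h1 := (Finset.sum_eq_zero_iff_of_nonneg (fun j _ => Finset.sum_nonneg
      (fun i _ => Complex.normSq_nonneg _))).mp h' j (Finset.mem_univ j)
  have h2 := (Finset.sum_eq_zero_iff_of_nonneg (fun i _ => Complex.normSq_nonneg _)).mp
      h1 i (Finset.mem_univ i)
  simpa using Complex.normSq_eq_zero.mp h2

lemma trace_mul_psd_eq {A B : Matrix n n ℂ} (hA : A.PosSemidef) (hB : B.PosSemidef) :
    0 ≤ (A * B).trace ∧ ((A * B).trace = 0 → A * B = 0) := by
  obtain ⟨P, rfl⟩ := posSemidef_iff_eq_transpose_mul_self.mp hA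
  obtain ⟨Q, rfl⟩ := posSemidef_iff_eq_transpose_mul_self.mp hB
  have key : (Pᴴ * P * (Qᴴ * Q)).trace = ((P * Qᴴ)ᴴ * (P * Qᴴ)).trace := by
    calc (Pᴴ * P * (Qᴴ * Q)).trace = (Pᴴ * (P * (Qᴴ * Q))).trace := by rw [mul_assoc]
    _ = ((P * (Qᴴ * Q)) * Pᴴ).trace := trace_mul_comm _ _
    _ = ((P * Qᴴ) * (P * Qᴴ)ᴴ).trace := by
        congr 1
        rw [conjTranspose_mul, conjTranspose_conjTranspose]
        noncomm_ring
    _ = ((P * Qᴴ)ᴴ * (P * Qᴴ)).trace := trace_mul_comm _ _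
  rw [key]
  refine ⟨trace_conjTranspose_mul_self_nonneg _, fun h => ?_⟩
  have hN : P * Qᴴ = 0 := eq_zero_of_trace_conjTranspose_mul_self _ h
  calc Pᴴ * P * (Qᴴ * Q) = Pᴴ * (P * Qᴴ) * Q := by noncomm_ring
  _ = 0 := by rw [hN, mul_zero, zero_mul]


lemma smul_posSemidef {c : ℝ} (hc : 0 ≤ c) {A : Matrix n n ℂ} (hA : A.PosSemidef) :
    ((c : ℂ) • A).PosSemidef := by
  refine Matrix.PosSemidef.of_dotProduct_mulVec_nonneg ?_ fun x => ?_
  · unfold Matrix.IsHermitian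
    rw [conjTranspose_smul, hA.1]
    congr 1
    simp [RCLike.star_def, Complex.conj_ofReal]
  · rw [smul_mulVec, dotProduct_smul, smul_eq_mul]
    exact mul_nonneg (by exact_mod_cast hc) (hA.dotProduct_mulVec_nonneg x)

lemma posSemidef_sum {ι : Type*} (s : Finset ι) (f : ι → Matrix n n ℂ)
    (h : ∀ i ∈ s, (f i).PosSemidef) : (∑ i ∈ s, f i).PosSemidef :=
  Finset.sum_induction f _ (fun _ _ ha hb => ha.add hb) Matrix.PosSemidef.zero h

section Jordan
variable [DecidableEq n]

lemma jordanDecomp {M : Matrix n n ℂ} (hM : M.IsHermitian) :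
    ∃ P Mp Mm : Matrix n n ℂ, P.PosSemidef ∧ (1 - P).PosSemidef ∧ Mp.PosSemidef ∧
      Mm.PosSemidef ∧ M = Mp - Mm ∧ P * Mp = Mp ∧ P * Mm = 0 := by
  set U : Matrix n n ℂ := (hM.eigenvectorUnitary : Matrix n n ℂ)
  have hU1 : Uᴴ * U = 1 := by
    rw [← Matrix.star_eq_conjTranspose]
    exact Matrix.mem_unitaryGroup_iff'.mp hM.eigenvectorUnitary.2
  have hU2 : U * Uᴴ = 1 := by
    rw [← Matrix.star_eq_conjTranspose]
    exact Matrix.mem_unitaryGroup_iff.mp hM.eigenvectorUnitary.2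
  set d : n → ℝ := hM.eigenvalues
  set p : n → ℂ := fun i => if 0 < d i then (1 : ℂ) else 0
  have sandwich : ∀ f g : n → ℂ,
      (U * Matrix.diagonal f * Uᴴ) * (U * Matrix.diagonal g * Uᴴ)
        = U * Matrix.diagonal (fun i => f i * g i) * Uᴴ := by
    intro f g
    calc (U * Matrix.diagonal f * Uᴴ) * (U * Matrix.diagonal g * Uᴴ)
        = U * (Matrix.diagonal f * (Uᴴ * U) * Matrix.diagonal g) * Uᴴ := by
          simp only [Matrix.mul_assoc]
      _ = U * Matrix.diagonal (fun i => f i * g i) * Uᴴ := by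
          rw [hU1, mul_one, Matrix.diagonal_mul_diagonal]
  refine ⟨U * Matrix.diagonal p * Uᴴ,
    U * Matrix.diagonal (fun i => ((max (d i) 0 : ℝ) : ℂ)) * Uᴴ,
    U * Matrix.diagonal (fun i => ((max (-(d i)) 0 : ℝ) : ℂ)) * Uᴴ, ?_, ?_, ?_, ?_, ?_, ?_, ?_⟩
  · refine (Matrix.PosSemidef.diagonal fun i => ?_).mul_mul_conjTranspose_same U
    simp only [Pi.zero_apply, p]
    by_cases h : 0 < d i <;> simp [h]
  · have h1 : (1 : Matrix n n ℂ) - U * Matrix.diagonal p * Uᴴ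
        = U * Matrix.diagonal (fun i => 1 - p i) * Uᴴ := by
      have : Matrix.diagonal (fun i => (1 : ℂ) - p i)
          = 1 - Matrix.diagonal p := by
        rw [← Matrix.diagonal_one, ← Matrix.diagonal_sub]
      rw [this, Matrix.mul_sub, Matrix.sub_mul, mul_one, hU2]
    rw [h1]
    refine (Matrix.PosSemidef.diagonal fun i => ?_).mul_mul_conjTranspose_same U
    simp only [Pi.zero_apply, p]
    by_cases h : 0 < d i <;> simp [h]
  · refine (Matrix.PosSemidef.diagonal fun i => ?_).mul_mul_conjTranspose_same U
    simp only [Pi.zero_apply]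
    rw [Complex.zero_le_real]
    positivity
  · refine (Matrix.PosSemidef.diagonal fun i => ?_).mul_mul_conjTranspose_same U
    simp only [Pi.zero_apply]
    rw [Complex.zero_le_real]
    positivity
  · rw [← Matrix.sub_mul, ← Matrix.mul_sub, Matrix.diagonal_sub]
    have heq : (fun i => ((max (d i) 0 : ℝ) : ℂ) - ((max (-(d i)) 0 : ℝ) : ℂ))
        = fun i => (d i : ℂ) := by
      funext i
      rw [← Complex.ofReal_sub]
      congr 1
      rcases le_or_gt (d i) 0 with h | h
      · rw [max_eq_right h, max_eq_left (by linarith)]; ring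
      · rw [max_eq_left h.le, max_eq_right (by linarith)]; ring
    rw [heq]
    exact hM.spectral_theorem
  · rw [sandwich]
    have heq : (fun i => p i * ((max (d i) 0 : ℝ) : ℂ))
        = fun i => ((max (d i) 0 : ℝ) : ℂ) := by
      funext i
      by_cases h : 0 < d i
      · simp [p, h]
      · simp [p, h, max_eq_right (not_lt.mp h)]
    rw [heq]
  · rw [sandwich]
    have heq : (fun i => p i * ((max (-(d i)) 0 : ℝ) : ℂ)) = fun _ => (0 : ℂ) := by
      funext i
      by_cases h : 0 < d i
      · simp [p, h, max_eq_right (by linarith : -(d i) ≤ 0)]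
      · simp [p, h]
    rw [heq, Matrix.diagonal_zero, Matrix.mul_zero, Matrix.zero_mul]

end Jordan

section Kraus
variable [DecidableEq n] [DecidableEq m] {k : ℕ}

lemma kraus_posSemidef (K : Fin k → Matrix m n ℂ) {A : Matrix n n ℂ} (hA : A.PosSemidef) :
    (∑ i, K i * A * (K i)ᴴ).PosSemidef :=
  posSemidef_sum _ _ fun i _ => hA.mul_mul_conjTranspose_same (K i)

lemma kraus_trace (K : Fin k → Matrix m n ℂ) (hK1 : ∑ i, (K i)ᴴ * K i = 1)
    (A : Matrix n n ℂ) : (∑ i, K i * A * (K i)ᴴ).trace = A.trace := by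
  rw [Matrix.trace_sum]
  have h : ∀ i, (K i * A * (K i)ᴴ).trace = ((K i)ᴴ * K i * A).trace := fun i => by
    rw [Matrix.trace_mul_cycle]
  simp_rw [h, ← Matrix.trace_sum, ← Finset.sum_mul, hK1, one_mul]

end Kraus

section Blocks
variable {L F R : Type*} [Fintype L] [Fintype F] [Fintype R]

lemma posSemidef_fromBlocks {A : Matrix n n ℂ} {B : Matrix m m ℂ}
    (hA : A.PosSemidef) (hB : B.PosSemidef) :
    (Matrix.fromBlocks A 0 0 B).PosSemidef := by
  obtain ⟨C, rfl⟩ := Matrix.posSemidef_iff_eq_transpose_mul_self.mp hA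
  obtain ⟨D, rfl⟩ := Matrix.posSemidef_iff_eq_transpose_mul_self.mp hB
  have h : Matrix.fromBlocks (Cᴴ * C) 0 0 (Dᴴ * D)
      = (Matrix.fromBlocks C 0 0 D)ᴴ * (Matrix.fromBlocks C 0 0 D) := by
    rw [Matrix.fromBlocks_conjTranspose, Matrix.fromBlocks_multiply]
    simp
  rw [h]
  exact Matrix.posSemidef_conjTranspose_mul_self _

lemma kronecker_conjTranspose (A : Matrix n n ℂ) (B : Matrix m m ℂ) :
    (A ⊗ₖ B)ᴴ = Aᴴ ⊗ₖ Bᴴ := by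
  ext ⟨i, j⟩ ⟨a, b⟩
  simp [Matrix.conjTranspose_apply, Matrix.kroneckerMap_apply, star_mul']

lemma posSemidef_kronecker {A : Matrix n n ℂ} {B : Matrix m m ℂ}
    (hA : A.PosSemidef) (hB : B.PosSemidef) : (A ⊗ₖ B).PosSemidef := by
  obtain ⟨C, rfl⟩ := Matrix.posSemidef_iff_eq_transpose_mul_self.mp hA
  obtain ⟨D, rfl⟩ := Matrix.posSemidef_iff_eq_transpose_mul_self.mp hB
  have h : (Cᴴ * C) ⊗ₖ (Dᴴ * D) = (C ⊗ₖ D)ᴴ * (C ⊗ₖ D) := by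
    rw [kronecker_conjTranspose, Matrix.mul_kronecker_mul]
  rw [h]
  exact Matrix.posSemidef_conjTranspose_mul_self _

lemma trace_fromBlocks (A : Matrix L L ℂ) (B : Matrix L R ℂ) (C : Matrix R L ℂ)
    (D : Matrix R R ℂ) :
    (Matrix.fromBlocks A B C D).trace = A.trace + D.trace := by
  simp [Matrix.trace, Fintype.sum_sum_type]

lemma fromBlocks_mul_fromBlocks (M N : Matrix L L ℂ) :
    (Matrix.fromBlocks M 0 0 (0 : Matrix R R ℂ)) * Matrix.fromBlocks N 0 0 0
      = Matrix.fromBlocks (M * N) 0 0 0 := by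
  rw [Matrix.fromBlocks_multiply]
  simp

end Blocks

section VecMulVec
variable [DecidableEq n]

lemma vecMulVec_mul_vecMulVec (a b c d : n → ℂ) :
    Matrix.vecMulVec a b * Matrix.vecMulVec c d = (b ⬝ᵥ c) • Matrix.vecMulVec a d := by
  ext i j
  simp only [Matrix.mul_apply, Matrix.vecMulVec_apply, Matrix.smul_apply, dotProduct,
    smul_eq_mul, Finset.sum_mul]
  exact Finset.sum_congr rfl fun k _ => by ring

lemma posSemidef_vecMulVec (a : n → ℂ) : (Matrix.vecMulVec a (star a)).PosSemidef := by
  rw [Matrix.vecMulVec_eq (ι := Unit), ← Matrix.conjTranspose_replicateCol]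
  exact Matrix.posSemidef_self_mul_conjTranspose _

lemma trace_vecMulVec (a b : n → ℂ) : (Matrix.vecMulVec a b).trace = b ⬝ᵥ a := by
  simp [Matrix.trace, Matrix.vecMulVec_apply, dotProduct, mul_comm]

end VecMulVec

section More
variable {n m : Type*} [Fintype n] [Fintype m]

lemma sandwich_mul {P Q : Type*} [Fintype P] [Fintype Q] [DecidableEq Q] {V : Matrix P Q ℂ}
    (hV : Vᴴ * V = 1) (M N : Matrix Q Q ℂ) :
    (V * M * Vᴴ) * (V * N * Vᴴ) = V * (M * N) * Vᴴ := by
  simp only [Matrix.mul_assoc]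
  rw [← Matrix.mul_assoc Vᴴ V, hV]
  simp [Matrix.one_mul]

lemma trace_sandwich {P Q : Type*} [Fintype P] [Fintype Q] [DecidableEq Q] {V : Matrix P Q ℂ}
    (hV : Vᴴ * V = 1) (M : Matrix Q Q ℂ) :
    (V * M * Vᴴ).trace = M.trace := by
  rw [Matrix.trace_mul_cycle, hV, one_mul]

lemma conjTranspose_sandwich {P Q : Type*} [Fintype P] [Fintype Q] (V : Matrix P Q ℂ)
    (M : Matrix Q Q ℂ) : (V * M * Vᴴ)ᴴ = V * Mᴴ * Vᴴ := by
  rw [Matrix.conjTranspose_mul, Matrix.conjTranspose_mul, Matrix.conjTranspose_conjTranspose,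
    Matrix.mul_assoc]

lemma posSemidef_one_sub_proj [DecidableEq n] {p : Matrix n n ℂ}
    (hp : p.IsHermitian) (hp2 : p * p = p) : ((1 : Matrix n n ℂ) - p).PosSemidef := by
  refine Matrix.posSemidef_iff_eq_transpose_mul_self.mpr ⟨1 - p, ?_⟩
  rw [Matrix.conjTranspose_sub, Matrix.conjTranspose_one, hp]
  have h : ((1 : Matrix n n ℂ) - p) * (1 - p) = 1 - p - p + p * p := by noncomm_ring
  rw [h, hp2]
  abel

lemma kraus_combo [DecidableEq n] [DecidableEq m] {k : ℕ} (K : Fin k → Matrix m n ℂ)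
    (a b : ℂ) (A B : Matrix n n ℂ) :
    ∑ i, K i * (a • A + b • B) * (K i)ᴴ
      = a • (∑ i, K i * A * (K i)ᴴ) + b • (∑ i, K i * B * (K i)ᴴ) := by
  rw [Finset.smul_sum, Finset.smul_sum, ← Finset.sum_add_distrib]
  refine Finset.sum_congr rfl fun i _ => ?_
  simp only [Matrix.mul_add, Matrix.add_mul, Matrix.mul_smul, Matrix.smul_mul]

lemma kraus_sub [DecidableEq n] [DecidableEq m] {k : ℕ} (K : Fin k → Matrix m n ℂ)
    (A B : Matrix n n ℂ) :
    ∑ i, K i * (A - B) * (K i)ᴴ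
      = (∑ i, K i * A * (K i)ᴴ) - (∑ i, K i * B * (K i)ᴴ) := by
  rw [← Finset.sum_sub_distrib]
  refine Finset.sum_congr rfl fun i _ => ?_
  simp only [Matrix.mul_sub, Matrix.sub_mul]

end More
end Stmt2Aux

open Stmt2Aux

lemma initMap_eq {L F R P : Type*} [Fintype L] [Fintype F] [Fintype R] [Fintype P]
    (V : Matrix P ((L × F) ⊕ R) ℂ) (τ : Matrix F F ℂ) (ρ : Matrix L L ℂ) :
    initMap V τ ρ = V * (Matrix.fromBlocks (ρ ⊗ₖ τ) 0 0 0 : Matrix ((L × F) ⊕ R) ((L × F) ⊕ R) ℂ) * Vᴴ := rfl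

lemma initMap_isDensity {L F R P : Type*} [Fintype L] [Fintype F] [Fintype R] [Fintype P]
    [DecidableEq L] [DecidableEq F] [DecidableEq R] [DecidableEq P]
    {V : Matrix P ((L × F) ⊕ R) ℂ} (hV : IsUnitaryMx V) {τ : Matrix F F ℂ}
    (hτ : IsDensity τ) {ρ : Matrix L L ℂ} (hρ : IsDensity ρ) :
    IsDensity (initMap V τ ρ) := by
  constructor
  · exact (posSemidef_fromBlocks (posSemidef_kronecker hρ.1 hτ.1)
      Matrix.PosSemidef.zero).mul_mul_conjTranspose_same V
  · rw [initMap_eq, trace_sandwich hV.1, trace_fromBlocks, Matrix.trace_zero, add_zero,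
      Matrix.trace_kronecker, hρ.2, hτ.2, mul_one]

/-- if a noise-tolerant encoder into a code exists, then the
noisy initializations of orthogonal pure states stay orthogonal (in the
trace pairing), for every convex mixture `ℳ_λ` of the noise with the identity. -/
theorem stmt2 (dL dP dF' dR' : ℕ)
    (V' : Matrix (Fin dP) ((Fin dL × Fin dF') ⊕ Fin dR') ℂ)
    (hV' : IsUnitaryMx V')
    (τ' : Matrix (Fin dF') (Fin dF') ℂ)
    (hτ' : τ'.PosDef ∧ τ'.trace = 1)
    (𝒩 : Matrix (Fin dP) (Fin dP) ℂ → Matrix (Fin dP) (Fin dP) ℂ)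
    (h𝒩 : IsCPTP 𝒩)
    (henc : ∃ (dF dR : ℕ) (V : Matrix (Fin dP) ((Fin dL × Fin dF) ⊕ Fin dR) ℂ)
        (τF : Matrix (Fin dF) (Fin dF) ℂ)
        (ΦP : Matrix (Fin dP) (Fin dP) ℂ → Matrix (Fin dP) (Fin dP) ℂ),
        IsUnitaryMx V ∧ IsDensity τF ∧ IsCPTP ΦP ∧
        (∀ ρ : Matrix (Fin dL) (Fin dL) ℂ, IsDensity ρ →
          ΦP (initMap V' τ' ρ) = initMap V τF ρ) ∧
        (∀ ρ : Matrix (Fin dL) (Fin dL) ℂ, IsDensity ρ →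
          ΦP (𝒩 (initMap V' τ' ρ)) = ΦP (initMap V' τ' ρ))) :
    ∀ l ∈ Set.Icc (0:ℝ) 1, ∀ ψi ψj : Fin dL → ℂ,
      star ψi ⬝ᵥ ψi = 1 → star ψj ⬝ᵥ ψj = 1 → star ψi ⬝ᵥ ψj = 0 →
      (initMap V' τ' (Matrix.vecMulVec ψi (star ψi)) *
        ((l : ℂ) • 𝒩 (initMap V' τ' (Matrix.vecMulVec ψj (star ψj))) +
         ((1 - l : ℝ) : ℂ) • initMap V' τ' (Matrix.vecMulVec ψj (star ψj)))).trace = 0 := by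
  intro l hl ψi ψj hi hj hij
  obtain ⟨hl0, hl1⟩ := hl
  obtain ⟨dF, dR, V, τF, ΦP, hVu, hτF, hΦP, hcode, hfix⟩ := henc
  obtain ⟨mN, KN, hKN, hKN1⟩ := h𝒩
  obtain ⟨mP, KP, hKP, hKP1⟩ := hΦP
  set ρi := Matrix.vecMulVec ψi (star ψi) with hρi_def
  set ρj := Matrix.vecMulVec ψj (star ψj) with hρj_def
  have hρi : IsDensity ρi := ⟨posSemidef_vecMulVec ψi, by rw [Stmt2Aux.trace_vecMulVec]; exact hi⟩
  have hρj : IsDensity ρj := ⟨posSemidef_vecMulVec ψj, by rw [Stmt2Aux.trace_vecMulVec]; exact hj⟩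
  have hρi2 : ρi * ρi = ρi := by
    rw [hρi_def, Stmt2Aux.vecMulVec_mul_vecMulVec, hi, one_smul]
  have hρij : ρi * ρj = 0 := by
    rw [hρi_def, hρj_def, Stmt2Aux.vecMulVec_mul_vecMulVec, hij, zero_smul]
  set A := initMap V' τ' ρi with hA_def
  set B := initMap V' τ' ρj with hB_def
  have hAd : IsDensity A := initMap_isDensity hV' ⟨hτ'.1.posSemidef, hτ'.2⟩ hρi
  have hBd : IsDensity B := initMap_isDensity hV' ⟨hτ'.1.posSemidef, hτ'.2⟩ hρj
  set X := (l : ℂ) • 𝒩 B + ((1 - l : ℝ) : ℂ) • B with hX_def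
  have hNBpsd : (𝒩 B).PosSemidef := by rw [hKN]; exact kraus_posSemidef KN hBd.1
  have hXpsd : X.PosSemidef :=
    (smul_posSemidef hl0 hNBpsd).add (smul_posSemidef (by linarith) hBd.1)
  -- the encoded states
  set Ei := initMap V τF ρi with hEi_def
  set Ej := initMap V τF ρj with hEj_def
  have hPA : ΦP A = Ei := hcode ρi hρi
  have hPB : ΦP B = Ej := hcode ρj hρj
  have hPNB : ΦP (𝒩 B) = Ej := by rw [hfix ρj hρj, hPB]
  have hPX : ΦP X = Ej := by
    rw [hX_def, hKP, kraus_combo, ← hKP, ← hKP, hPNB, hPB, ← add_smul]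
    have h1 : (l : ℂ) + ((1 - l : ℝ) : ℂ) = 1 := by push_cast; ring
    rw [h1, one_smul]
  -- Jordan decomposition of A - X
  have hDherm : (A - X).IsHermitian := hAd.1.1.sub hXpsd.1
  obtain ⟨P, Dp, Dm, hPpsd, hP1psd, hDppsd, hDmpsd, hDeq, hPDp, hPDm⟩ := jordanDecomp hDherm
  have hΦDp : (ΦP Dp).PosSemidef := by rw [hKP]; exact kraus_posSemidef KP hDppsd
  have hΦDm : (ΦP Dm).PosSemidef := by rw [hKP]; exact kraus_posSemidef KP hDmpsd
  have hsplit : Ei - Ej = ΦP Dp - ΦP Dm := by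
    have h1 : ΦP (A - X) = ΦP A - ΦP X := by rw [hKP, hKP, hKP, kraus_sub]
    have h2 : ΦP (Dp - Dm) = ΦP Dp - ΦP Dm := by rw [hKP, hKP, hKP, kraus_sub]
    rw [← hPA, ← hPX, ← h1, hDeq, h2]
  -- the projection Q onto the code block of layer i
  set Q := V * (Matrix.fromBlocks (ρi ⊗ₖ (1 : Matrix (Fin dF) (Fin dF) ℂ)) 0 0 0 : Matrix ((Fin dL × Fin dF) ⊕ Fin dR) ((Fin dL × Fin dF) ⊕ Fin dR) ℂ) * Vᴴ with hQ_def
  have hQpsd : Q.PosSemidef :=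
    (posSemidef_fromBlocks (posSemidef_kronecker hρi.1 Matrix.PosSemidef.one)
      Matrix.PosSemidef.zero).mul_mul_conjTranspose_same V
  have hQherm : Qᴴ = Q := by
    rw [hQ_def, conjTranspose_sandwich, Matrix.fromBlocks_conjTranspose,
      kronecker_conjTranspose, hρi.1.1, Matrix.conjTranspose_one]
    simp
  have hQidem : Q * Q = Q := by
    rw [hQ_def, sandwich_mul hVu.1, fromBlocks_mul_fromBlocks, ← Matrix.mul_kronecker_mul,
      hρi2, one_mul]
  have hQ1psd : ((1 : Matrix (Fin dP) (Fin dP) ℂ) - Q).PosSemidef :=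
    posSemidef_one_sub_proj hQherm hQidem
  -- trace pairings of Q with the encoded states
  have hQEi : (Q * Ei).trace = 1 := by
    rw [hQ_def, hEi_def, initMap_eq, sandwich_mul hVu.1, fromBlocks_mul_fromBlocks,
      ← Matrix.mul_kronecker_mul, hρi2, one_mul, trace_sandwich hVu.1, trace_fromBlocks,
      Matrix.trace_zero, add_zero, Matrix.trace_kronecker, hρi.2, hτF.2, mul_one]
  have hQEj : Q * Ej = 0 := by
    rw [hQ_def, hEj_def, initMap_eq, sandwich_mul hVu.1, fromBlocks_mul_fromBlocks,
      ← Matrix.mul_kronecker_mul, hρij, one_mul, Matrix.zero_kronecker, Matrix.fromBlocks_zero,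
      Matrix.mul_zero, Matrix.zero_mul]
  -- 1 ≤ trace Dp
  have hkey : (Q * (ΦP Dp)).trace - (Q * (ΦP Dm)).trace = 1 := by
    have h1 : (Q * (Ei - Ej)).trace = 1 := by
      rw [Matrix.mul_sub, Matrix.trace_sub, hQEj, Matrix.trace_zero, sub_zero, hQEi]
    rw [← h1, hsplit, Matrix.mul_sub, Matrix.trace_sub]
  have htrsplit : (Q * (ΦP Dp)).trace + (((1 : Matrix (Fin dP) (Fin dP) ℂ) - Q)
      * (ΦP Dp)).trace = Dp.trace := by
    rw [← Matrix.trace_add, ← Matrix.add_mul, add_sub_cancel, one_mul]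
    rw [hKP]
    exact kraus_trace KP hKP1 Dp
  have hDptrace : (1 : ℂ) ≤ Dp.trace := by
    have e1 : 0 ≤ (Q * (ΦP Dm)).trace := (trace_mul_psd_eq hQpsd hΦDm).1
    have e2 : 0 ≤ (((1 : Matrix (Fin dP) (Fin dP) ℂ) - Q) * (ΦP Dp)).trace :=
      (trace_mul_psd_eq hQ1psd hΦDp).1
    have : Dp.trace = 1 + ((Q * (ΦP Dm)).trace
        + (((1 : Matrix (Fin dP) (Fin dP) ℂ) - Q) * (ΦP Dp)).trace) := by
      rw [← hkey, ← htrsplit]; ring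
    rw [this]
    have := add_nonneg e1 e2
    calc (1 : ℂ) = 1 + 0 := by ring
    _ ≤ _ := by exact add_le_add_right this 1
  -- back on the physical space
  have htrDp : Dp.trace = (P * A).trace - (P * X).trace := by
    have h1 : P * A - P * X = Dp := by
      rw [← Matrix.mul_sub, hDeq, Matrix.mul_sub, hPDp, hPDm, sub_zero]
    rw [← h1, Matrix.trace_sub]
  have hPAle : (P * A).trace + (((1 : Matrix (Fin dP) (Fin dP) ℂ) - P) * A).trace = 1 := by
    rw [← Matrix.trace_add, ← Matrix.add_mul, add_sub_cancel, one_mul, hAd.2]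
  set x := (P * X).trace with hx_def
  set y := (((1 : Matrix (Fin dP) (Fin dP) ℂ) - P) * A).trace with hy_def
  have hxnn : 0 ≤ x := (trace_mul_psd_eq hPpsd hXpsd).1
  have hynn : 0 ≤ y := (trace_mul_psd_eq hP1psd hAd.1).1
  have hPAtr : (P * A).trace = 1 - y := by rw [← hPAle]; ring
  have hxy : x + y ≤ 0 := by
    have h2 : x + y = 1 - Dp.trace := by rw [htrDp, hPAtr]; ring
    rw [h2]
    simpa using sub_nonpos.mpr hDptrace
  have hx0 : x = 0 := le_antisymm
    (calc x ≤ x + y := le_add_of_nonneg_right hynn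
      _ ≤ 0 := hxy) hxnn
  have hy0 : y = 0 := le_antisymm
    (calc y ≤ x + y := le_add_of_nonneg_left hxnn
      _ ≤ 0 := hxy) hynn
  have hPX0 : P * X = 0 := (trace_mul_psd_eq hPpsd hXpsd).2 hx0
  have h1PA : ((1 : Matrix (Fin dP) (Fin dP) ℂ) - P) * A = 0 :=
    (trace_mul_psd_eq hP1psd hAd.1).2 hy0
  have hPA_eq : P * A = A := by
    rw [Matrix.sub_mul, Matrix.one_mul] at h1PA
    exact (sub_eq_zero.mp h1PA).symm
  have hAP : A * P = A := by
    have h := congrArg Matrix.conjTranspose hPA_eq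
    rw [Matrix.conjTranspose_mul, hAd.1.1, hPpsd.1] at h
    exact h
  have hfinal : A * X = 0 := by
    rw [← hAP, Matrix.mul_assoc, hPX0, Matrix.mul_zero]
  rw [hfinal, Matrix.trace_zero]
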